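/- B_2 is generated over B_1 by brackets with the generators: the second term of the lower central series satisfies L_2 = (Σ_{i=1}^n [x_i, L_1]) + L_3, i.e. every element of [A,A] is, modulo L_3, a sum of brackets [x_i, a] with a ∈ A. -/
import Mathlib


/-- The lower central series of the free algebra `A_n = FreeAlgebra ℂ (Fin n)`,
as a chain of `ℂ`-subspaces: `lcs n 1 = A`, `lcs n (m+1) = span {[a,w] : a ∈ A, w ∈ lcs n m}`.
(The value at `0` is junk, set to `⊤`.) -/
def lcs (n : ℕ) : ℕ → Submodule ℂ (FreeAlgebra ℂ (Fin n))
  | 0 => ⊤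
  | 1 => ⊤
  | m + 2 => Submodule.span ℂ
      {y | ∃ a w, w ∈ lcs n (m + 1) ∧ y = a * w - w * a}

/-- For `g ∈ A` and a `ℂ`-subspace `V ⊆ A`, `[g, V] = span {[g,w] : w ∈ V}`. -/
def brS {n : ℕ} (g : FreeAlgebra ℂ (Fin n)) (V : Submodule ℂ (FreeAlgebra ℂ (Fin n))) :
    Submodule ℂ (FreeAlgebra ℂ (Fin n)) :=
  Submodule.span ℂ {y | ∃ w ∈ V, y = g * w - w * g}

lemma brS_mem {n : ℕ} (g w : FreeAlgebra ℂ (Fin n)) (V : Submodule ℂ (FreeAlgebra ℂ (Fin n)))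
    (hw : w ∈ V) : g * w - w * g ∈ brS g V :=
  Submodule.subset_span ⟨w, hw, rfl⟩

lemma comm_mem_sum (n : ℕ) (a : FreeAlgebra ℂ (Fin n)) :
    ∀ w : FreeAlgebra ℂ (Fin n),
      a * w - w * a ∈ ∑ i : Fin n, brS (FreeAlgebra.ι ℂ i) (lcs n 1) := by
  set S := ∑ i : Fin n, brS (FreeAlgebra.ι ℂ i) (lcs n 1) with hS
  induction a using FreeAlgebra.induction with
  | grade0 r =>
      intro w
      have : (algebraMap ℂ (FreeAlgebra ℂ (Fin n)) r) * w -
          w * (algebraMap ℂ (FreeAlgebra ℂ (Fin n)) r) = 0 := by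
        rw [Algebra.commutes]; exact sub_self _
      rw [this]; exact Submodule.zero_mem _
  | grade1 i =>
      intro w
      have h1 : FreeAlgebra.ι ℂ i * w - w * FreeAlgebra.ι ℂ i
          ∈ brS (FreeAlgebra.ι ℂ i) (lcs n 1) := brS_mem _ _ _ (by trivial)
      have h2 : brS (FreeAlgebra.ι ℂ i) (lcs n 1) ≤ S := by
        rw [hS]
        exact Finset.single_le_sum (f := fun j => brS (FreeAlgebra.ι ℂ j) (lcs n 1))
          (fun j _ => bot_le) (Finset.mem_univ i)
      exact h2 h1
  | mul a b ha hb =>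
      intro w
      have key : a * b * w - w * (a * b) =
          (a * (b * w) - (b * w) * a) + (b * (w * a) - (w * a) * b) := by
        noncomm_ring
      rw [key]
      exact Submodule.add_mem _ (ha _) (hb _)
  | add a b ha hb =>
      intro w
      have key : (a + b) * w - w * (a + b) =
          (a * w - w * a) + (b * w - w * b) := by noncomm_ring
      rw [key]
      exact Submodule.add_mem _ (ha _) (hb _)

/-- `L_2 = (Σ_{i=1}^n [x_i, L_1]) + L_3`. -/
theorem stmt_0 (n : ℕ) (hn : 2 ≤ n) :
    lcs n 2 = (∑ i : Fin n, brS (FreeAlgebra.ι ℂ i) (lcs n 1)) + lcs n 3 := by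
  set S := ∑ i : Fin n, brS (FreeAlgebra.ι ℂ i) (lcs n 1) with hS
  apply le_antisymm
  · show lcs n (0 + 2) ≤ _
    rw [lcs]
    apply Submodule.span_le.2
    rintro y ⟨a, w, -, rfl⟩
    exact Submodule.mem_sup_left (comm_mem_sum n a w)
  · rw [Submodule.add_eq_sup]
    apply sup_le
    · rw [hS]
      apply Finset.sum_induction _ (fun p => p ≤ lcs n 2)
      · intro p q hp hq
        rw [Submodule.add_eq_sup]; exact sup_le hp hq
      · exact bot_le
      · intro i _
        apply Submodule.span_le.2
        rintro y ⟨w, hw, rfl⟩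
        show _ ∈ lcs n (0 + 2)
        rw [lcs]
        exact Submodule.subset_span ⟨FreeAlgebra.ι ℂ i, w, hw, rfl⟩
    · show lcs n (1 + 2) ≤ lcs n (0 + 2)
      rw [lcs]
      apply Submodule.span_le.2
      rintro y ⟨a, w, hw, rfl⟩
      rw [lcs]
      exact Submodule.subset_span ⟨a, w, trivial, rfl⟩
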